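/- For the Jacobi matrix J with b_j = 0 for all j, a_j = 1 for j ≠ q, and a_q > 0 arbitrary, the perturbation determinant with respect to the free Jacobi matrix J₀ satisfies L(z + 1/z; J, J₀) = 1 + (1 − a_q²) z² (z^{2q} − 1)/(z² − 1) for z in the open unit disk, z ≠ 0. -/

import Mathlib

/-- Matrix entries of the resolvent `(J₀ - (z + 1/z))⁻¹` of the free Jacobi matrix,
in the standard basis `{e_i}_{i ≥ 1}`: `r_{ij}(z) = (z^{|i-j|} - z^{i+j})/(z - z⁻¹)`. -/
noncomputable def freeResolventEntry (z : ℂ) (i j : ℕ) : ℂ :=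
  (z ^ (max i j - min i j) - z ^ (i + j)) / (z - z⁻¹)

theorem perturbation_determinant_offdiag_rank_two (q : ℕ) (hq : 1 ≤ q) (a : ℝ)
    (ha : 0 < a) (z : ℂ) (hz : ‖z‖ < 1) (hz0 : z ≠ 0) :
    Matrix.det
      (!![1 + (a - 1) * freeResolventEntry z q (q + 1), (a - 1) * freeResolventEntry z q q;
          (a - 1) * freeResolventEntry z (q + 1) (q + 1),
          1 + (a - 1) * freeResolventEntry z (q + 1) q]) =
      1 + (1 - (a : ℂ) ^ 2) * z ^ 2 * (z ^ (2 * q) - 1) / (z ^ 2 - 1) := by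
  have hz2 : z ^ 2 - 1 ≠ 0 := by
    intro h
    have h1 : z ^ 2 = 1 := by linear_combination h
    have h2 : ‖z ^ 2‖ < 1 := by
      rw [norm_pow]
      nlinarith [norm_nonneg z]
    rw [h1, norm_one] at h2
    linarith
  have hd : z - z⁻¹ ≠ 0 := by
    intro h
    apply hz2
    have : z * z - 1 = 0 := by
      field_simp at h
      linear_combination h
    linear_combination this
  have e1 : max q (q + 1) - min q (q + 1) = 1 := by omega
  have e2 : max q q - min q q = 0 := by omega
  have e3 : max (q + 1) (q + 1) - min (q + 1) (q + 1) = 0 := by omega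
  have e4 : max (q + 1) q - min (q + 1) q = 1 := by omega
  simp only [Matrix.det_fin_two_of, freeResolventEntry, e1, e2, e3, e4, pow_zero, pow_one]
  have hq1 : z ^ (q + (q + 1)) = z ^ q * z ^ q * z := by ring
  have hq2 : z ^ (q + q) = z ^ q * z ^ q := by ring
  have hq3 : z ^ (q + 1 + (q + 1)) = z ^ q * z ^ q * z ^ 2 := by ring
  have hq4 : z ^ (2 * q) = z ^ q * z ^ q := by ring
  have hds : z - z⁻¹ = (z ^ 2 - 1) / z := by field_simp
  rw [hq1, hq2, hq3, hq4, hds]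
  field_simp
  ring
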